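/- CLUB with the true conditional likelihood is tight iff X and ω are independent: I_CLUB(X;ω) = I(X;ω) if and only if p(x,ω) = p(x)p(ω) for all x,ω. -/

import Mathlib

open Finset

/-- Mutual information of a joint pmf on a product of finite sets (natural log). -/
noncomputable def mutualInfo {A B : Type*} [Fintype A] [Fintype B] (p : A → B → ℝ) : ℝ :=
  ∑ a, ∑ b, p a b * Real.log (p a b / ((∑ b', p a b') * (∑ a', p a' b)))

/-- The CLUB estimator (with the true conditional `p(x|ω) = p(x,ω)/p(ω)`). -/
noncomputable def clubMI {X W : Type*} [Fintype X] [Fintype W] (p : X → W → ℝ) : ℝ :=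
  (∑ x, ∑ w, p x w * Real.log (p x w / ∑ x', p x' w)) -
    ∑ x, ∑ w, (∑ w', p x w') * (∑ x', p x' w) * Real.log (p x w / ∑ x', p x' w)

/-- Gibbs: for positive weights with equal sums, `∑ w log(z/w) = 0` iff `z = w`. -/
lemma gibbs_eq_iff {ι : Type*} (s : Finset ι) (w z : ι → ℝ)
    (hw : ∀ i ∈ s, 0 < w i) (hz : ∀ i ∈ s, 0 < z i)
    (hsum : ∑ i ∈ s, z i = ∑ i ∈ s, w i) :
    (∑ i ∈ s, w i * Real.log (z i / w i)) = 0 ↔ ∀ i ∈ s, z i = w i := by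
  constructor
  · intro h0
    have hterm : ∀ i ∈ s, 0 ≤ z i - w i - w i * Real.log (z i / w i) := by
      intro i hi
      have hpos : 0 < z i / w i := div_pos (hz i hi) (hw i hi)
      have := Real.log_le_sub_one_of_pos hpos
      have h2 : w i * Real.log (z i / w i) ≤ w i * (z i / w i - 1) :=
        mul_le_mul_of_nonneg_left this (hw i hi).le
      have h3 : w i * (z i / w i - 1) = z i - w i := by
        rw [mul_sub, mul_one, mul_comm, div_mul_cancel₀ _ (hw i hi).ne']
      linarith
    have hsum0 : ∑ i ∈ s, (z i - w i - w i * Real.log (z i / w i)) = 0 := by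
      rw [Finset.sum_sub_distrib, Finset.sum_sub_distrib, hsum, h0]
      ring
    have hall := (Finset.sum_eq_zero_iff_of_nonneg hterm).mp hsum0
    intro i hi
    have hi0 := hall i hi
    by_contra hne
    have hpos : 0 < z i / w i := div_pos (hz i hi) (hw i hi)
    have hne1 : z i / w i ≠ 1 := by
      intro h1
      exact hne ((div_eq_one_iff_eq (hw i hi).ne').mp h1)
    have := Real.log_lt_sub_one_of_pos hpos hne1
    have h2 : w i * Real.log (z i / w i) < w i * (z i / w i - 1) :=
      mul_lt_mul_of_pos_left this (hw i hi)
    have h3 : w i * (z i / w i - 1) = z i - w i := by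
      rw [mul_sub, mul_one, mul_comm, div_mul_cancel₀ _ (hw i hi).ne']
    linarith
  · intro h
    rw [Finset.sum_congr rfl (fun i hi => by rw [h i hi, div_self (hw i hi).ne',
      Real.log_one, mul_zero])]
    simp

/-- CLUB with the true conditional is tight iff `X` and `ω` are independent. -/
theorem club_eq_mutualInfo_iff_indep {X W : Type*} [Fintype X] [Fintype W]
    (p : X → W → ℝ) (hp : ∀ x w, 0 < p x w) (hsum : ∑ x, ∑ w, p x w = 1) :
    clubMI p = mutualInfo p ↔
      ∀ x w, p x w = (∑ w', p x w') * (∑ x', p x' w) := by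
  classical
  have hXne : Nonempty X := by
    by_contra h
    rw [not_nonempty_iff] at h
    simp [Finset.univ_eq_empty] at hsum
  have hWne : Nonempty W := by
    by_contra h
    rw [not_nonempty_iff] at h
    simp [Finset.univ_eq_empty] at hsum
  set pX : X → ℝ := fun x => ∑ w, p x w with hpXdef
  set pW : W → ℝ := fun w => ∑ x, p x w with hpWdef
  have hpX : ∀ x, 0 < pX x := fun x => Finset.sum_pos (fun w _ => hp x w) Finset.univ_nonempty
  have hpW : ∀ w, 0 < pW w := fun w => Finset.sum_pos (fun x _ => hp x w) Finset.univ_nonempty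
  have hX1 : ∑ x, pX x = 1 := hsum
  have hW1 : ∑ w, pW w = 1 := by
    rw [← hsum]; exact Finset.sum_comm
  set S1 : ℝ := ∑ x, ∑ w, p x w * Real.log (p x w) with hS1
  set S2 : ℝ := ∑ x, pX x * Real.log (pX x) with hS2
  set S3 : ℝ := ∑ w, pW w * Real.log (pW w) with hS3
  set S4 : ℝ := ∑ x, ∑ w, pX x * pW w * Real.log (p x w) with hS4
  -- helper sums
  have hA : ∑ x, ∑ w, p x w * Real.log (pX x) = S2 := by
    refine Finset.sum_congr rfl fun x _ => ?_
    rw [← Finset.sum_mul]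
  have hB : ∑ x, ∑ w, p x w * Real.log (pW w) = S3 := by
    rw [Finset.sum_comm]
    refine Finset.sum_congr rfl fun w _ => ?_
    rw [← Finset.sum_mul]
  have hC : ∑ x, ∑ w, pX x * pW w * Real.log (pX x) = S2 := by
    refine Finset.sum_congr rfl fun x _ => ?_
    have : ∑ w, pX x * pW w * Real.log (pX x)
        = (pX x * Real.log (pX x)) * ∑ w, pW w := by
      rw [Finset.mul_sum]
      exact Finset.sum_congr rfl fun w _ => by ring
    rw [this, hW1, mul_one]
  have hD : ∑ x, ∑ w, pX x * pW w * Real.log (pW w) = S3 := by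
    rw [Finset.sum_comm]
    refine Finset.sum_congr rfl fun w _ => ?_
    have : ∑ x, pX x * pW w * Real.log (pW w)
        = (pW w * Real.log (pW w)) * ∑ x, pX x := by
      rw [Finset.mul_sum]
      exact Finset.sum_congr rfl fun x _ => by ring
    rw [this, hX1, mul_one]
  have hMI : mutualInfo p = S1 - S2 - S3 := by
    unfold mutualInfo
    have : ∀ x w, p x w * Real.log (p x w / (pX x * pW w))
        = p x w * Real.log (p x w) - p x w * Real.log (pX x) - p x w * Real.log (pW w) := by
      intro x w
      rw [Real.log_div (hp x w).ne' (mul_pos (hpX x) (hpW w)).ne',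
        Real.log_mul (hpX x).ne' (hpW w).ne']
      ring
    calc (∑ x, ∑ w, p x w * Real.log (p x w / ((∑ w', p x w') * ∑ x', p x' w)))
        = ∑ x, ∑ w, (p x w * Real.log (p x w) - p x w * Real.log (pX x)
            - p x w * Real.log (pW w)) :=
          Finset.sum_congr rfl fun x _ => Finset.sum_congr rfl fun w _ => this x w
      _ = S1 - S2 - S3 := by
          rw [← hA, ← hB]
          simp [Finset.sum_sub_distrib, hS1]
  have hClub : clubMI p = S1 - S4 := by
    unfold clubMI
    have e1 : ∀ x w, p x w * Real.log (p x w / pW w)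
        = p x w * Real.log (p x w) - p x w * Real.log (pW w) := by
      intro x w
      rw [Real.log_div (hp x w).ne' (hpW w).ne']; ring
    have e2 : ∀ x w, pX x * pW w * Real.log (p x w / pW w)
        = pX x * pW w * Real.log (p x w) - pX x * pW w * Real.log (pW w) := by
      intro x w
      rw [Real.log_div (hp x w).ne' (hpW w).ne']; ring
    calc (∑ x, ∑ w, p x w * Real.log (p x w / ∑ x', p x' w)) -
          ∑ x, ∑ w, (∑ w', p x w') * (∑ x', p x' w) * Real.log (p x w / ∑ x', p x' w)
        = (∑ x, ∑ w, (p x w * Real.log (p x w) - p x w * Real.log (pW w))) -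
          ∑ x, ∑ w, (pX x * pW w * Real.log (p x w) - pX x * pW w * Real.log (pW w)) := by
          rw [Finset.sum_congr rfl fun x _ => Finset.sum_congr rfl fun w _ => e1 x w,
            Finset.sum_congr rfl fun x _ => Finset.sum_congr rfl fun w _ => e2 x w]
      _ = ((∑ x, ∑ w, p x w * Real.log (p x w)) - ∑ x, ∑ w, p x w * Real.log (pW w)) -
          ((∑ x, ∑ w, pX x * pW w * Real.log (p x w)) -
            ∑ x, ∑ w, pX x * pW w * Real.log (pW w)) := by
          simp [Finset.sum_sub_distrib]
      _ = (S1 - S3) - (S4 - S3) := by rw [hB, hD]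
      _ = S1 - S4 := by ring
  -- the KL divergence term
  have hKL : ∑ x, ∑ w, pX x * pW w * Real.log (p x w / (pX x * pW w))
      = S4 - S2 - S3 := by
    have : ∀ x w, pX x * pW w * Real.log (p x w / (pX x * pW w))
        = pX x * pW w * Real.log (p x w) - pX x * pW w * Real.log (pX x)
          - pX x * pW w * Real.log (pW w) := by
      intro x w
      rw [Real.log_div (hp x w).ne' (mul_pos (hpX x) (hpW w)).ne',
        Real.log_mul (hpX x).ne' (hpW w).ne']
      ring
    calc (∑ x, ∑ w, pX x * pW w * Real.log (p x w / (pX x * pW w)))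
        = ∑ x, ∑ w, (pX x * pW w * Real.log (p x w) - pX x * pW w * Real.log (pX x)
            - pX x * pW w * Real.log (pW w)) :=
          Finset.sum_congr rfl fun x _ => Finset.sum_congr rfl fun w _ => this x w
      _ = S4 - S2 - S3 := by
          rw [← hC, ← hD]
          simp [Finset.sum_sub_distrib, hS4]
  -- rewrite as a sum over pairs and apply Gibbs
  have hpair : ∑ x, ∑ w, pX x * pW w * Real.log (p x w / (pX x * pW w))
      = ∑ i : X × W, (pX i.1 * pW i.2) * Real.log (p i.1 i.2 / (pX i.1 * pW i.2)) := by
    rw [← Finset.sum_product', Finset.univ_product_univ]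
  have hq1 : ∑ x, ∑ w, pX x * pW w = 1 := by
    rw [Finset.sum_congr rfl fun x _ => show ∑ w, pX x * pW w = pX x by
      rw [← Finset.mul_sum, hW1, mul_one]]
    exact hX1
  have l : ∀ f : X → W → ℝ, ∑ i : X × W, f i.1 i.2 = ∑ x, ∑ w, f x w := fun f => by
    rw [← Finset.univ_product_univ, Finset.sum_product']
  have hpairsum : ∑ i : X × W, p i.1 i.2 = ∑ i : X × W, pX i.1 * pW i.2 := by
    rw [l p, l fun x w => pX x * pW w, hq1]
    exact hsum
  have hgibbs := gibbs_eq_iff Finset.univ (fun i : X × W => pX i.1 * pW i.2)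
    (fun i : X × W => p i.1 i.2)
    (fun i _ => mul_pos (hpX i.1) (hpW i.2)) (fun i _ => hp i.1 i.2) hpairsum
  constructor
  · intro heq
    have h0 : ∑ i : X × W, (pX i.1 * pW i.2) * Real.log (p i.1 i.2 / (pX i.1 * pW i.2)) = 0 := by
      rw [← hpair, hKL]
      have : S1 - S4 = S1 - S2 - S3 := by rw [← hClub, ← hMI, heq]
      linarith
    intro x w
    exact hgibbs.mp h0 (x, w) (Finset.mem_univ _)
  · intro h
    have h0 : ∑ i : X × W, (pX i.1 * pW i.2) * Real.log (p i.1 i.2 / (pX i.1 * pW i.2)) = 0 :=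
      hgibbs.mpr fun i _ => h i.1 i.2
    rw [← hpair, hKL] at h0
    rw [hClub, hMI]
    linarith
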